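/- Let N, D : X → R with D > 0 on X, and let x* ∈ X with α* = N(x*)/D(x*). Then x* minimizes N(x)/D(x) over X if and only if x* minimizes N(x) - α*·D(x) over X and the minimum value of N(x) - α*·D(x) equals 0. -/

import Mathlib

/-- Fundamental Dinkelbach equivalence: `x*` minimizes `N/D` iff `x*` minimizes
`N - α* D` with minimum value `0`, where `α* = N(x*)/D(x*)`. -/
theorem dinkelbach_equivalence {X : Type*} (N D : X → ℝ) (hD : ∀ y, 0 < D y)
    (xs : X) :
    (∀ x, N xs / D xs ≤ N x / D x) ↔
      ((∀ x, N xs - (N xs / D xs) * D xs ≤ N x - (N xs / D xs) * D x) ∧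
        N xs - (N xs / D xs) * D xs = 0) := by
  have hne : D xs ≠ 0 := (hD xs).ne'
  have hxs : N xs - (N xs / D xs) * D xs = 0 := by field_simp; ring
  constructor
  · intro h
    refine ⟨fun x => ?_, hxs⟩
    rw [hxs]
    have hx := hD x
    have := (div_le_div_iff₀ (hD xs) hx).mp (h x)
    have h2 : N xs / D xs * D x ≤ N x := by
      rw [div_mul_eq_mul_div, div_le_iff₀ (hD xs)]; linarith
    linarith
  · rintro ⟨h, _⟩ x
    have := h x
    rw [hxs] at this
    have hx := hD x
    rw [div_le_div_iff₀ (hD xs) hx]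
    have h2 : N xs / D xs * D x ≤ N x := by linarith
    rw [div_mul_eq_mul_div, div_le_iff₀ (hD xs)] at h2
    linarith
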